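/- Let n be a natural number, H ≤ Σ_n a subgroup, and V a nontrivial subgroup of H every element of which commutes with every element of H (V is central in H). Assume V does not act transitively on Fin n, and that for every H-invariant setoid λ on Fin n with ⊥ < λ < ⊤, V does not act transitively on the set of λ-classes. Call a setoid μ on Fin n strongly V-fixed if x ∼_μ v x for all v ∈ V and all x. Then: (a) the V-orbit setoid o_V, defined by x ∼ y iff y = v x for some v ∈ V, is H-invariant, strongly V-fixed, satisfies ⊥ < o_V < ⊤, and o_V ≤ μ for every strongly V-fixed setoid μ; (b) for every H-invariant setoid λ with ⊥ < λ < ⊤, the relation λ_V defined by x ∼ y iff x ∼_λ v y for some v ∈ V is an equivalence relation, is H-invariant and strongly V-fixed, satisfies λ ≤ λ_V and ⊥ < λ_V < ⊤, and λ_V ≤ μ for every strongly V-fixed setoid μ with λ ≤ μ. -/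

import Mathlib

/-- Let `H ≤ Σ_n` and let `V` be a nontrivial central subgroup of `H`
which does not act transitively on `Fin n` nor on the classes of any `H`-invariant
setoid `λ` with `⊥ < λ < ⊤`.  Then (a) the `V`-orbit setoid `o_V` is the minimal
strongly `V`-fixed setoid, is `H`-invariant and proper nontrivial; and (b) for every
`H`-invariant `λ` with `⊥ < λ < ⊤`, the relation `λ_V` (`x ∼ y ↔ ∃ v ∈ V, x ∼_λ v y`)
is an equivalence relation which is the minimal strongly `V`-fixed coarsening of `λ`,
is `H`-invariant, and satisfies `⊥ < λ_V < ⊤`. -/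
theorem stmt4 (n : ℕ) (H V : Subgroup (Equiv.Perm (Fin n)))
    (hVH : V ≤ H) (hVnt : V ≠ ⊥)
    (hcentral : ∀ v ∈ V, ∀ h ∈ H, v * h = h * v)
    (hVntrans : ¬ ∀ x y : Fin n, ∃ v ∈ V, v x = y)
    (hnotrans : ∀ lam : Setoid (Fin n),
      (∀ h ∈ H, ∀ x y : Fin n, lam.r x y → lam.r (h x) (h y)) →
      ⊥ < lam → lam < ⊤ →
      ¬ ∀ x y : Fin n, ∃ v ∈ V, lam.r (v x) y) :
    (∃ oV : Setoid (Fin n),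
      (∀ x y : Fin n, oV.r x y ↔ ∃ v ∈ V, y = v x) ∧
      (∀ h ∈ H, ∀ x y : Fin n, oV.r x y → oV.r (h x) (h y)) ∧
      (∀ v ∈ V, ∀ x : Fin n, oV.r x (v x)) ∧
      ⊥ < oV ∧ oV < ⊤ ∧
      (∀ mu : Setoid (Fin n), (∀ v ∈ V, ∀ x : Fin n, mu.r x (v x)) → oV ≤ mu)) ∧
    ∀ lam : Setoid (Fin n),
      (∀ h ∈ H, ∀ x y : Fin n, lam.r x y → lam.r (h x) (h y)) →
      ⊥ < lam → lam < ⊤ →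
      ∃ lamV : Setoid (Fin n),
        (∀ x y : Fin n, lamV.r x y ↔ ∃ v ∈ V, lam.r x (v y)) ∧
        (∀ h ∈ H, ∀ x y : Fin n, lamV.r x y → lamV.r (h x) (h y)) ∧
        (∀ v ∈ V, ∀ x : Fin n, lamV.r x (v x)) ∧
        lam ≤ lamV ∧ ⊥ < lamV ∧ lamV < ⊤ ∧
        (∀ mu : Setoid (Fin n), (∀ v ∈ V, ∀ x : Fin n, mu.r x (v x)) →
          lam ≤ mu → lamV ≤ mu) := by
  have comm : ∀ v ∈ V, ∀ h ∈ H, ∀ x : Fin n, h (v x) = v (h x) := by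
    intro v hv h hh x
    rw [← Equiv.Perm.mul_apply, ← hcentral v hv h hh, Equiv.Perm.mul_apply]
  constructor
  · -- part (a)
    have oEquiv : Equivalence (fun x y : Fin n => ∃ v ∈ V, y = v x) := by
      refine ⟨?_, ?_, ?_⟩
      · exact fun x => ⟨1, one_mem V, rfl⟩
      · rintro x y ⟨v, hv, rfl⟩
        exact ⟨v⁻¹, inv_mem hv, (Equiv.symm_apply_apply v x).symm⟩
      · rintro x y z ⟨v, hv, rfl⟩ ⟨w, hw, rfl⟩
        exact ⟨w * v, mul_mem hw hv, rfl⟩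
    refine ⟨Setoid.mk (fun x y => ∃ v ∈ V, y = v x) oEquiv, fun x y => Iff.rfl,
      ?_, ?_, ?_, ?_, ?_⟩
    · rintro h hh x y ⟨v, hv, rfl⟩
      exact ⟨v, hv, comm v hv h hh x⟩
    · exact fun v hv x => ⟨v, hv, rfl⟩
    · -- ⊥ < oV
      refine bot_lt_iff_ne_bot.mpr fun hbot => ?_
      obtain ⟨v, hv, hv1⟩ : ∃ v ∈ V, v ≠ 1 := by
        by_contra hc
        push_neg at hc
        exact hVnt ((Subgroup.eq_bot_iff_forall V).mpr hc)
      obtain ⟨x, hx⟩ : ∃ x, v x ≠ x := by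
        by_contra hc
        push_neg at hc
        exact hv1 (Equiv.ext hc)
      have : (⊥ : Setoid (Fin n)).r x (v x) := hbot ▸ ⟨v, hv, rfl⟩
      rw [Setoid.bot_def] at this
      exact hx this.symm
    · -- oV < ⊤
      refine lt_top_iff_ne_top.mpr fun htop => hVntrans fun x y => ?_
      have : (Setoid.mk (fun x y => ∃ v ∈ V, y = v x) oEquiv : Setoid (Fin n)).r x y := by
        rw [htop, Setoid.top_def]; trivial
      obtain ⟨v, hv, rfl⟩ := this
      exact ⟨v, hv, rfl⟩
    · intro mu hmu
      rw [Setoid.le_def]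
      rintro x y ⟨v, hv, rfl⟩
      exact hmu v hv x
  · -- part (b)
    intro lam hlamH hbot htop
    have lsymm : ∀ {x y}, lam.r x y → lam.r y x := fun h => lam.symm' h
    have ltrans : ∀ {x y z}, lam.r x y → lam.r y z → lam.r x z :=
      fun h h' => lam.trans' h h'
    have lEquiv : Equivalence (fun x y : Fin n => ∃ v ∈ V, lam.r x (v y)) := by
      refine ⟨?_, ?_, ?_⟩
      · exact fun x => ⟨1, one_mem V, lam.refl' x⟩
      · rintro x y ⟨v, hv, h⟩
        refine ⟨v⁻¹, inv_mem hv, ?_⟩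
        have := hlamH v⁻¹ (hVH (inv_mem hv)) _ _ (lsymm h)
        simpa using this
      · rintro x y z ⟨v, hv, h⟩ ⟨w, hw, h'⟩
        refine ⟨v * w, mul_mem hv hw, ?_⟩
        exact ltrans h (by simpa using hlamH v (hVH hv) _ _ h')
    refine ⟨Setoid.mk (fun x y => ∃ v ∈ V, lam.r x (v y)) lEquiv,
      fun x y => Iff.rfl, ?_, ?_, ?_, ?_, ?_, ?_⟩
    · rintro h hh x y ⟨v, hv, hr⟩
      exact ⟨v, hv, (comm v hv h hh y) ▸ hlamH h hh _ _ hr⟩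
    · intro v hv x
      exact ⟨v⁻¹, inv_mem hv, by simpa using lam.refl' x⟩
    · rw [Setoid.le_def]
      intro x y h
      exact ⟨1, one_mem V, by simpa using h⟩
    · -- ⊥ < lamV
      refine lt_of_lt_of_le hbot ?_
      rw [Setoid.le_def]
      intro x y h
      exact ⟨1, one_mem V, by simpa using h⟩
    · -- lamV < ⊤
      refine lt_top_iff_ne_top.mpr fun ht => ?_
      refine hnotrans lam hlamH hbot htop fun x y => ?_
      have : (Setoid.mk (fun x y => ∃ v ∈ V, lam.r x (v y)) lEquiv : Setoid (Fin n)).r y x := by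
        rw [ht, Setoid.top_def]; trivial
      obtain ⟨v, hv, h⟩ := this
      exact ⟨v, hv, lsymm h⟩
    · intro mu hmu hle
      rw [Setoid.le_def]
      rintro x y ⟨v, hv, h⟩
      exact mu.trans' (hle h) (mu.symm' (hmu v hv y))
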